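/- Let r ≥ 2, let α > 0 and 0 < β < 2/(r−1) be real numbers, let Θ be an r×r complex Hermitian positive semidefinite matrix with tr(Θ) > 0, and let w be any r×r complex matrix. Then tr(Θ) + (α·β / (4·(1 + α·‖w‖_F²)))·tr(Θ·(w·wᴴ − wᴴ·w)) > 0. (This is the pointwise inequality establishing positivity of the closed (1,1)-form Ω_{α,β} = π*Ω^{Map} + (β/4)dd^cΓ(·,α) on the parameter space Z, as in Proposition 2.2: here Θ plays the role of the curvature term iF_V(ρ_h, ρ̄_h) of the pulled-back universal quotient bundle, whose trace is the Fubini–Study form evaluated on the horizontal vector, and w plays the role of the value of the Higgs field at a point.) -/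

import Mathlib

open Matrix
open scoped ComplexOrder

lemma trace_nonneg_of_psd {n : Type*} [Fintype n] [DecidableEq n]
    {M : Matrix n n ℂ} (h : M.PosSemidef) : 0 ≤ M.trace := by
  rw [Matrix.trace]
  refine Finset.sum_nonneg fun i _ => ?_
  exact h.diag_nonneg

lemma trace_mul_nonneg_of_psd {n : Type*} [Fintype n] [DecidableEq n]
    {P Q : Matrix n n ℂ} (hP : P.PosSemidef) (hQ : Q.PosSemidef) :
    0 ≤ (P * Q).trace := by
  open scoped MatrixOrder in
  (have hT : (CFC.sqrt Q)ᴴ = CFC.sqrt Q := (CFC.sqrt_nonneg Q).posSemidef.isHermitian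
   have key : (CFC.sqrt Q * P * (CFC.sqrt Q)ᴴ).trace = (P * Q).trace := by
     rw [hT, Matrix.trace_mul_cycle, CFC.sqrt_mul_sqrt_self Q hQ.nonneg,
       Matrix.trace_mul_comm]
   exact key ▸ trace_nonneg_of_psd (hP.mul_mul_conjTranspose_same (CFC.sqrt Q)))

lemma trace_mul_le_of_psd {n : Type*} [Fintype n] [DecidableEq n]
    {Θ : Matrix n n ℂ} (hΘ : Θ.PosSemidef) {A : Matrix n n ℂ} (hA : A.PosSemidef) :
    (Θ * A).trace ≤ Θ.trace * A.trace := by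
  have hH : Θ.IsHermitian := hΘ.isHermitian
  set lam : n → ℝ := hH.eigenvalues with hlam
  have hlnn : ∀ i, 0 ≤ lam i := hΘ.eigenvalues_nonneg
  set t : ℝ := ∑ i, lam i with ht
  have hle : ∀ i, lam i ≤ t := fun i =>
    Finset.single_le_sum (fun j _ => hlnn j) (Finset.mem_univ i)
  have hU : (hH.eigenvectorUnitary : Matrix n n ℂ) * star (hH.eigenvectorUnitary : Matrix n n ℂ) = 1 :=
    Matrix.mem_unitaryGroup_iff.mp hH.eigenvectorUnitary.2
  have hU' : star (hH.eigenvectorUnitary : Matrix n n ℂ) * (hH.eigenvectorUnitary : Matrix n n ℂ) = 1 :=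
    Matrix.mem_unitaryGroup_iff'.mp hH.eigenvectorUnitary.2
  have htr : Θ.trace = ((t : ℝ) : ℂ) := by
    conv_lhs => rw [hH.spectral_theorem]
    rw [Unitary.conjStarAlgAut_apply, Matrix.trace_mul_cycle, hU', Matrix.one_mul, Matrix.trace_diagonal]
    simp only [Function.comp]
    push_cast [ht]
    rfl
  have hdiagpsd : (Matrix.diagonal (fun i => ((t - lam i : ℝ) : ℂ))).PosSemidef := by
    refine Matrix.PosSemidef.diagonal fun i => ?_
    rw [Complex.le_def]
    simp [sub_nonneg, hle i]
  have hsubeq : ((t : ℂ)) • (1 : Matrix n n ℂ) - Θ =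
      (hH.eigenvectorUnitary : Matrix n n ℂ) *
        Matrix.diagonal (fun i => ((t - lam i : ℝ) : ℂ)) *
        (star (hH.eigenvectorUnitary : Matrix n n ℂ)) := by
    have hd : Matrix.diagonal (fun i => ((t - lam i : ℝ) : ℂ)) =
        ((t : ℂ)) • (1 : Matrix n n ℂ) - Matrix.diagonal (RCLike.ofReal ∘ lam) := by
      rw [Matrix.smul_one_eq_diagonal, Matrix.diagonal_sub]
      refine congrArg Matrix.diagonal (funext fun i => ?_)
      show ((t - lam i : ℝ) : ℂ) = (t : ℂ) - ((lam i : ℝ) : ℂ)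
      push_cast
      ring
    rw [hd, Matrix.mul_sub, Matrix.sub_mul]
    conv_lhs => rw [hH.spectral_theorem, Unitary.conjStarAlgAut_apply, ← hlam]
    congr 1
    rw [mul_smul_comm, Matrix.mul_one, smul_mul_assoc, hU]
  have hsub : (((t : ℂ)) • (1 : Matrix n n ℂ) - Θ).PosSemidef := by
    rw [hsubeq]
    exact hdiagpsd.mul_mul_conjTranspose_same _
  have h0 := trace_mul_nonneg_of_psd hsub hA
  rw [Matrix.sub_mul, smul_mul_assoc, Matrix.one_mul, Matrix.trace_sub,
    Matrix.trace_smul, sub_nonneg, smul_eq_mul] at h0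
  rw [htr]
  exact h0

/-- For `r ≥ 2`, real parameters `α > 0` and `0 < β < 2/(r−1)`, a Hermitian positive
semidefinite `r × r` complex matrix `Θ` with `tr Θ > 0`, and any `r × r` complex matrix
`w`, one has `tr(Θ) + (αβ / (4(1 + α‖w‖_F²)))·tr(Θ·(w wᴴ − wᴴ w)) > 0`, where
`‖w‖_F² = tr(wᴴ w)` is the squared Frobenius norm.  (The inequality is between complex
numbers that are in fact real, using the partial order on `ℂ`.) -/
theorem pointwise_positivity_Omega_alpha_beta
    (r : ℕ) (hr : 2 ≤ r) (α β : ℝ) (hα : 0 < α) (hβ : 0 < β)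
    (hβ' : β < 2 / ((r : ℝ) - 1))
    (Θ w : Matrix (Fin r) (Fin r) ℂ)
    (hΘ : Θ.IsHermitian) (hΘpsd : Θ.PosSemidef) (hΘtr : 0 < Θ.trace) :
    0 < Θ.trace
        + ((α * β / (4 * (1 + α * ((wᴴ * w).trace.re))) : ℝ) : ℂ)
          * (Θ * (w * wᴴ - wᴴ * w)).trace := by
  have hwpsd := Matrix.posSemidef_conjTranspose_mul_self w
  have hwpsd' := Matrix.posSemidef_self_mul_conjTranspose w
  set N : ℝ := (wᴴ * w).trace.re with hN
  have hNnn : 0 ≤ (wᴴ * w).trace := trace_nonneg_of_psd hwpsd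
  have hNre : 0 ≤ N := (Complex.le_def.mp hNnn).1
  have hXim : (wᴴ * w).trace.im = 0 := ((Complex.le_def.mp hNnn).2).symm
  have ha : 0 ≤ (Θ * (w * wᴴ)).trace := trace_mul_nonneg_of_psd hΘpsd hwpsd'
  have hb : 0 ≤ (Θ * (wᴴ * w)).trace := trace_mul_nonneg_of_psd hΘpsd hwpsd
  have hare : 0 ≤ (Θ * (w * wᴴ)).trace.re := (Complex.le_def.mp ha).1
  have haim : (Θ * (w * wᴴ)).trace.im = 0 := ((Complex.le_def.mp ha).2).symm
  have hbre : 0 ≤ (Θ * (wᴴ * w)).trace.re := (Complex.le_def.mp hb).1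
  have hbim : (Θ * (wᴴ * w)).trace.im = 0 := ((Complex.le_def.mp hb).2).symm
  have hTre : 0 < Θ.trace.re := (Complex.lt_def.mp hΘtr).1
  have hTim : Θ.trace.im = 0 := ((Complex.lt_def.mp hΘtr).2).symm
  set T : ℝ := Θ.trace.re with hT
  have hale : (Θ * (w * wᴴ)).trace ≤ Θ.trace * (wᴴ * w).trace := by
    have h := trace_mul_le_of_psd hΘpsd hwpsd'
    rwa [Matrix.trace_mul_comm w wᴴ] at h
  have hble : (Θ * (wᴴ * w)).trace ≤ Θ.trace * (wᴴ * w).trace :=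
    trace_mul_le_of_psd hΘpsd hwpsd
  have halere : (Θ * (w * wᴴ)).trace.re ≤ T * N := by
    have h := (Complex.le_def.mp hale).1
    simpa [Complex.mul_re, hTim, hXim] using h
  have hblere : (Θ * (wᴴ * w)).trace.re ≤ T * N := by
    have h := (Complex.le_def.mp hble).1
    simpa [Complex.mul_re, hTim, hXim] using h
  have h2 : β < 2 := by
    refine lt_of_lt_of_le hβ' (div_le_self (by norm_num) ?_)
    have : (2 : ℝ) ≤ (r : ℝ) := by exact_mod_cast hr
    linarith
  have hαN : 0 ≤ α * N := mul_nonneg hα.le hNre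
  have hD : 0 < 4 * (1 + α * N) := by nlinarith
  rw [Matrix.mul_sub, Matrix.trace_sub, Complex.lt_def]
  constructor
  · simp only [Complex.zero_re, Complex.add_re, Complex.mul_re, Complex.ofReal_re,
      Complex.ofReal_im, Complex.sub_re, Complex.sub_im, haim, hbim, sub_zero, zero_mul,
      sub_self, mul_zero, ← hT]
    have h1 : -T < α * β * ((Θ * (w * wᴴ)).trace.re - (Θ * (wᴴ * w)).trace.re)
        / (4 * (1 + α * N)) := by
      rw [lt_div_iff₀ hD]
      nlinarith [mul_nonneg (mul_nonneg hα.le (sub_nonneg.2 h2.le)) (mul_nonneg hTre.le hNre),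
        mul_nonneg (mul_nonneg hα.le hβ.le) hare,
        mul_nonneg (mul_nonneg hα.le hβ.le) (sub_nonneg.2 hblere)]
    rw [div_mul_eq_mul_div] at *
    linarith
  · simp only [Complex.zero_im, Complex.add_im, Complex.mul_im, Complex.ofReal_im,
      Complex.sub_im, haim, hbim, hTim, sub_self, zero_mul, mul_zero, add_zero, zero_add]
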